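/- Let G be a finite group, N ⊴ G a normal subgroup, and M an irreducible complex representation of G with character χ. If the restriction of M to N, tensored appropriately, is such that N acts trivially on some tensor power M^{⊗n}, then the restriction χ|_N = χ(1)·ψ for a single G-stable linear character ψ of N. -/

import Mathlib

open CategoryTheory Polynomial

private lemma real_pow_inj {x y : ℝ} (hx : 0 ≤ x) (hy : 0 ≤ y) {e : ℕ} (he : e ≠ 0)
    (h : x ^ e = y ^ e) : x = y := by
  rcases lt_trichotomy x y with h1 | h1 | h1
  · exact absurd h (by have := pow_lt_pow_left₀ h1 hx he; linarith)
  · exact h1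
  · exact absurd h (by have := pow_lt_pow_left₀ h1 hy he; linarith)

private lemma norm_sum_le_card (s : Multiset ℂ) (h : ∀ a ∈ s, ‖a‖ = 1) :
    ‖s.sum‖ ≤ (s.card : ℝ) := by
  induction s using Multiset.induction with
  | empty => simp
  | cons b t ih =>
    have hb : ‖b‖ = 1 := h b (Multiset.mem_cons_self b t)
    have ht := ih (fun a ha => h a (Multiset.mem_cons_of_mem ha))
    calc ‖(b ::ₘ t).sum‖ = ‖b + t.sum‖ := by rw [Multiset.sum_cons]
      _ ≤ ‖b‖ + ‖t.sum‖ := norm_add_le _ _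
      _ ≤ 1 + t.card := by rw [hb]; linarith
      _ = ((b ::ₘ t).card : ℝ) := by rw [Multiset.card_cons]; push_cast; ring

private lemma multiset_all_eq_of_norm_sum (s : Multiset ℂ) (h1 : ∀ a ∈ s, ‖a‖ = 1)
    (hsum : ‖s.sum‖ = (s.card : ℝ)) : ∀ a ∈ s, (s.card : ℂ) * a = s.sum := by
  induction s using Multiset.induction with
  | empty => simp
  | cons b t ih =>
    have hb : ‖b‖ = 1 := h1 b (Multiset.mem_cons_self b t)
    have ht1 : ∀ a ∈ t, ‖a‖ = 1 := fun a ha => h1 a (Multiset.mem_cons_of_mem ha)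
    have hsum' : ‖b + t.sum‖ = 1 + (t.card : ℝ) := by
      have h := hsum
      rw [Multiset.sum_cons, Multiset.card_cons] at h
      rw [h]; push_cast; ring
    have hle : ‖t.sum‖ ≤ (t.card : ℝ) := norm_sum_le_card t ht1
    have htri : ‖b + t.sum‖ ≤ ‖b‖ + ‖t.sum‖ := norm_add_le _ _
    have heq : ‖t.sum‖ = (t.card : ℝ) := by rw [hb, hsum'] at htri; linarith
    have hadd : ‖b + t.sum‖ = ‖b‖ + ‖t.sum‖ := by rw [hb, heq, hsum']
    have hray : SameRay ℝ b t.sum := sameRay_iff_norm_add.mpr hadd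
    rcases Nat.eq_zero_or_pos t.card with hc | hc
    · have ht0 : t = 0 := Multiset.card_eq_zero.mp hc
      subst ht0
      intro a ha
      have hab : a = b := by simpa using ha
      subst hab; simp
    · have hcne : (t.card : ℂ) ≠ 0 := by exact_mod_cast hc.ne'
      have htsum_ne : t.sum ≠ 0 := by
        intro h0; rw [h0, norm_zero] at heq
        have : (0:ℝ) < t.card := by exact_mod_cast hc
        linarith
      have hray2 : SameRay ℝ ((t.card : ℝ) • b) t.sum :=
        hray.nonneg_smul_left (by positivity)
      have hkey : ((t.card : ℝ)) • b = t.sum := by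
        apply hray2.eq_of_norm_eq
        rw [norm_smul, hb, heq]
        simp
      have hkeyC : (t.card : ℂ) * b = t.sum := by
        rw [← hkey, Complex.real_smul]
        norm_num
      have hallt : ∀ a ∈ t, a = b := by
        intro a ha
        have h := ih ht1 heq a ha
        rw [← hkeyC] at h
        exact mul_left_cancel₀ hcne h
      intro a ha
      have hab : a = b := by
        rcases Multiset.mem_cons.mp ha with h | h
        · exact h
        · exact hallt a h
      subst hab
      rw [Multiset.sum_cons, ← hkeyC, Multiset.card_cons]
      push_cast; ring

private lemma end_scalar {V : Type} [AddCommGroup V] [Module ℂ V] [FiniteDimensional ℂ V]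
    (f : Module.End ℂ V) (e : ℕ) (he : 0 < e) (hfe : f ^ e = 1)
    (htr : ‖LinearMap.trace ℂ V f‖ = (Module.finrank ℂ V : ℝ))
    (hd : 0 < Module.finrank ℂ V) :
    f = (LinearMap.trace ℂ V f / (Module.finrank ℂ V : ℂ)) • 1 := by
  classical
  haveI : Nontrivial V := Module.finrank_pos_iff.mp hd
  set d := Module.finrank ℂ V with hdd
  have hdC : (d : ℂ) ≠ 0 := by exact_mod_cast hd.ne'
  let b := Module.Free.chooseBasis ℂ V
  set M := LinearMap.toMatrix b b f with hM
  have hcard : Fintype.card (Module.Free.ChooseBasisIndex ℂ V) = d :=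
    (Module.finrank_eq_card_chooseBasisIndex ℂ V).symm
  have hchar : f.charpoly = M.charpoly := LinearMap.charpoly_toMatrix f b
  have hMe : M ^ e = 1 := by
    have key : ∀ k, LinearMap.toMatrix b b (f ^ k) = M ^ k := by
      intro k
      induction k with
      | zero => rw [pow_zero, pow_zero, LinearMap.toMatrix_one]
      | succ k ih => rw [pow_succ, pow_succ, LinearMap.toMatrix_mul, ih]
    rw [← key, hfe, LinearMap.toMatrix_one]
  set p := M.charpoly with hp
  have hmonic : p.Monic := M.charpoly_monic
  have hsplits : p.Splits := IsAlgClosed.splits p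
  have hroots_card : p.roots.card = d := by
    rw [splits_iff_card_roots.mp hsplits, hp, Matrix.charpoly_natDegree_eq_dim, hcard]
  -- every root of the characteristic polynomial is an e-th root of unity
  have hrootpow : ∀ μ ∈ p.roots, μ ^ e = 1 := by
    intro μ hμ
    have hμroot : p.IsRoot μ := isRoot_of_mem_roots hμ
    have hdet : (μ • (1 : Matrix _ _ ℂ) - M).det = 0 := by
      have h1 : p.eval μ = (μ • (1 : Matrix _ _ ℂ) - M).det := by
        rw [hp, Matrix.charpoly]
        rw [show ((Matrix.charmatrix M).det).eval μ
            = (Polynomial.evalRingHom μ) (Matrix.charmatrix M).det from rfl]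
        rw [RingHom.map_det]
        congr 1
        ext i j
        by_cases hij : i = j <;>
          simp [hij, Matrix.charmatrix_apply, Matrix.map_apply, Matrix.one_apply,
            Matrix.smul_apply, Matrix.sub_apply]
      rw [← h1]
      exact hμroot
    obtain ⟨v, hv0, hv⟩ := Matrix.exists_mulVec_eq_zero_iff.mpr hdet
    have hMv : M.mulVec v = μ • v := by
      rw [Matrix.sub_mulVec, Matrix.smul_mulVec, Matrix.one_mulVec, sub_eq_zero] at hv
      exact hv.symm
    have hpowk : ∀ k, (M ^ k).mulVec v = μ ^ k • v := by
      intro k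
      induction k with
      | zero => simp [Matrix.one_mulVec]
      | succ k ih =>
        rw [pow_succ, pow_succ, ← Matrix.mulVec_mulVec, hMv, Matrix.mulVec_smul, ih,
          smul_smul]
        rw [mul_comm μ (μ ^ k)]
    have he2 := hpowk e
    rw [hMe, Matrix.one_mulVec] at he2
    have h3 : (μ ^ e - 1) • v = 0 := by
      rw [sub_smul, one_smul, ← he2, sub_self]
    rcases smul_eq_zero.mp h3 with h | h
    · exact sub_eq_zero.mp h
    · exact absurd h hv0
  have hnorm1 : ∀ μ ∈ p.roots, ‖μ‖ = 1 := by
    intro μ hμ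
    refine real_pow_inj (norm_nonneg μ) zero_le_one he.ne' ?_
    rw [← norm_pow, hrootpow μ hμ, norm_one, one_pow]
  have htraceM : LinearMap.trace ℂ V f = p.roots.sum := by
    rw [LinearMap.trace_eq_matrix_trace ℂ b f]
    exact Matrix.trace_eq_sum_roots_charpoly M
  have hsumnorm : ‖p.roots.sum‖ = (p.roots.card : ℝ) := by
    rw [← htraceM, htr, hroots_card]
  have hall := multiset_all_eq_of_norm_sum p.roots hnorm1 hsumnorm
  set lam := LinearMap.trace ℂ V f / (d : ℂ) with hlam
  have hrootlam : ∀ μ ∈ p.roots, μ = lam := by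
    intro μ hμ
    have h3 := hall μ hμ
    rw [hroots_card] at h3
    rw [hlam, htraceM, ← h3, mul_div_cancel_left₀ _ hdC]
  have hroots_rep : p.roots = Multiset.replicate d lam :=
    Multiset.eq_replicate.mpr ⟨hroots_card, hrootlam⟩
  have hp_eq : p = (X - C lam) ^ d := by
    have h4 := hsplits.eq_prod_roots_of_monic hmonic
    rw [hroots_rep] at h4
    simpa [Multiset.map_replicate, Multiset.prod_replicate] using h4
  haveI : Nontrivial (Module.End ℂ V) := by
    obtain ⟨v, hv⟩ := exists_ne (0 : V)
    exact nontrivial_of_ne 1 0 (fun h => hv (by simpa using LinearMap.congr_fun h v))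
  have hint : IsIntegral ℂ f := LinearMap.isIntegral f
  set q := minpoly ℂ f with hq
  have hq0 : q ∣ (X : ℂ[X]) ^ e - 1 := by
    apply minpoly.dvd
    rw [map_sub, map_pow, aeval_X, map_one, hfe, sub_self]
  have hXe : Squarefree ((X : ℂ[X]) ^ e - 1) := by
    have hsep := Polynomial.separable_X_pow_sub_C (1 : ℂ)
      (by exact_mod_cast Nat.cast_ne_zero.mpr he.ne') one_ne_zero
    rw [map_one] at hsep
    exact hsep.squarefree
  have hsq : Squarefree q := hXe.squarefree_of_dvd hq0
  have hq_dvd : q ∣ (X - C lam) ^ d := by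
    rw [← hp_eq]
    have h7 := LinearMap.minpoly_dvd_charpoly f
    rwa [hchar] at h7
  have hprime : Prime (X - C lam) := prime_X_sub_C lam
  obtain ⟨i, hid, hass⟩ := (dvd_prime_pow hprime d).mp hq_dvd
  match i, hass with
  | 0, hass => 
    exfalso
    rw [pow_zero] at hass
    exact (minpoly.not_isUnit ℂ f) (associated_one_iff_isUnit.mp hass)
  | 1, hass =>
    rw [pow_one] at hass
    have hqeq : q = X - C lam :=
      eq_of_monic_of_associated (minpoly.monic hint) (monic_X_sub_C lam) hass
    have haev := minpoly.aeval ℂ f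
    rw [← hq, hqeq, map_sub, aeval_X, aeval_C] at haev
    have hfeq : f = algebraMap ℂ (Module.End ℂ V) lam := by rwa [sub_eq_zero] at haev
    rw [hfeq, Module.algebraMap_end_eq_smul_id]
    rfl
  | (k+2), hass =>
    exfalso
    have h2 : (X - C lam) * (X - C lam) ∣ q := by
      have h5 : (X - C lam) ^ 2 ∣ (X - C lam) ^ (k + 2) := pow_dvd_pow _ (by omega)
      have h6 := h5.trans hass.symm.dvd
      rwa [sq] at h6
    exact hprime.not_unit (hsq _ h2)

theorem stmt10 {G : Type} [Group G] [Fintype G] (N : Subgroup G) (hN : N.Normal)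
    (V : FDRep ℂ G) [Simple V] (n : ℕ) (hn : 0 < n)
    (htriv : ∀ m ∈ N, (V.character m) ^ n = (V.character 1) ^ n) :
    ∃ ψ : ↥N →* ℂˣ,
      (∀ (g : G) (m : G) (hm : m ∈ N),
        ψ ⟨g * m * g⁻¹, hN.conj_mem m hm g⟩ = ψ ⟨m, hm⟩) ∧
      ∀ (m : G) (hm : m ∈ N), V.character m = V.character 1 * (ψ ⟨m, hm⟩ : ℂ) := by
  classical
  set d := Module.finrank ℂ V with hdd
  have hd : 0 < d := by
    by_contra h
    have h0 : d = 0 := by omega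
    have hsub : Subsingleton (↑V : Type) := by
      rw [hdd] at h0
      exact Module.finrank_zero_iff.mp h0
    have hid : (𝟙 V : V ⟶ V) = 0 := by
      ext x
      have hall : ∀ a b : (↑V : Type), a = b := fun a b => Subsingleton.elim a b
      exact hall _ _
    exact id_nonzero V hid
  have hdC : (d : ℂ) ≠ 0 := by exact_mod_cast hd.ne'
  have hdR : (0:ℝ) < (d : ℝ) := by exact_mod_cast hd
  have hχ1 : V.character 1 = (d : ℂ) := by
    rw [FDRep.char_one]
  have hnorm : ∀ m ∈ N, ‖V.character m‖ = (d : ℝ) := by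
    intro m hm
    have h := htriv m hm
    refine real_pow_inj (norm_nonneg _) hdR.le hn.ne' ?_
    rw [← norm_pow, h, hχ1, norm_pow, Complex.norm_natCast]
  -- scalar action on N
  have hscal : ∀ m ∈ N, V.ρ m = (V.character m / (d:ℂ)) • 1 := by
    intro m hm
    exact end_scalar (V.ρ m) (Fintype.card G) Fintype.card_pos
      (by rw [← map_pow, pow_card_eq_one, map_one]) (hnorm m hm) hd
  set lam : G → ℂ := fun m => V.character m / (d:ℂ) with hlamdef
  have hlam_ne : ∀ m ∈ N, lam m ≠ 0 := by
    intro m hm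
    apply div_ne_zero _ hdC
    intro h0
    have := hnorm m hm
    rw [h0, norm_zero] at this
    linarith
  have htr1 : LinearMap.trace ℂ V (1 : Module.End ℂ V) = (d : ℂ) := by
    rw [LinearMap.trace_one]
  have hlam_mul : ∀ m₁ ∈ N, ∀ m₂ ∈ N, lam (m₁ * m₂) = lam m₁ * lam m₂ := by
    intro m₁ hm₁ m₂ hm₂
    have h1 : V.ρ (m₁ * m₂) = (lam m₁ * lam m₂) • 1 := by
      rw [map_mul, hscal m₁ hm₁, hscal m₂ hm₂, smul_mul_smul_comm, mul_one]
    have h2 : V.character (m₁ * m₂) = (lam m₁ * lam m₂) * d := by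
      show LinearMap.trace ℂ V (V.ρ (m₁ * m₂)) = _
      rw [h1, map_smul, htr1, smul_eq_mul]
    show V.character (m₁ * m₂) / (d:ℂ) = _
    rw [h2, mul_div_cancel_right₀ _ hdC]
  refine ⟨{ toFun := fun m => Units.mk0 (lam ↑m) (hlam_ne ↑m m.2),
            map_one' := ?_, map_mul' := ?_ }, ?_, ?_⟩
  · apply Units.ext
    show lam ((1 : ↥N) : G) = 1
    simp only [OneMemClass.coe_one]
    show V.character 1 / (d:ℂ) = 1
    rw [hχ1, div_self hdC]
  · intro a b
    apply Units.ext
    show lam ((a * b : ↥N) : G) = lam ↑a * lam ↑b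
    rw [Subgroup.coe_mul]
    exact hlam_mul _ a.2 _ b.2
  · intro g m hm
    apply Units.ext
    show lam (g * m * g⁻¹) = lam m
    show V.character (g * m * g⁻¹) / (d:ℂ) = V.character m / (d:ℂ)
    rw [FDRep.char_conj]
  · intro m hm
    show V.character m = V.character 1 * (V.character m / (d:ℂ))
    rw [hχ1, mul_div_cancel₀ _ hdC]
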